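/- Kleisli composition of multirelations is associative: for multirelations R ⊆ X × ℘(Y), S ⊆ Y × ℘(Z), T ⊆ Z × ℘(W), we have (R ∘ S) ∘ T = R ∘ (S ∘ T). -/
import Mathlib


open Set

/-- Ordinary relational composition. -/
def relComp {A B C : Type*} (R : Set (A × B)) (S : Set (B × C)) : Set (A × C) :=
  {p | ∃ b, (p.1, b) ∈ R ∧ (b, p.2) ∈ S}

/-- Kleisli composition of multirelations. -/
def kleisliComp {X Y Z : Type*} (R : Set (X × Set Y)) (S : Set (Y × Set Z)) :
    Set (X × Set Z) :=
  {p | ∃ B, (p.1, B) ∈ R ∧ p.2 = ⋃₀ {C | ∃ b ∈ B, (b, C) ∈ S}}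

/-- Kleisli lifting of a multirelation. -/
def kleisliLift {Y Z : Type*} (S : Set (Y × Set Z)) : Set (Set Y × Set Z) :=
  {p | p.2 = ⋃₀ {C | ∃ b ∈ p.1, (b, C) ∈ S}}

/-- Parikh lifting of a multirelation. -/
def parikhLift {Y Z : Type*} (S : Set (Y × Set Z)) : Set (Set Y × Set Z) :=
  {p | ∀ b ∈ p.1, (b, p.2) ∈ S}

/-- Parikh composition of multirelations. -/
def parikhComp {X Y Z : Type*} (R : Set (X × Set Y)) (S : Set (Y × Set Z)) :
    Set (X × Set Z) :=
  {p | ∃ B, (p.1, B) ∈ R ∧ ∀ b ∈ B, (b, p.2) ∈ S}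

/-- Peleg composition of multirelations. -/
def pelegComp {X Y Z : Type*} (R : Set (X × Set Y)) (S : Set (Y × Set Z)) :
    Set (X × Set Z) :=
  {p | ∃ B, (p.1, B) ∈ R ∧
    ∃ f : Y → Set Z, (∀ b ∈ B, (b, f b) ∈ S) ∧ p.2 = ⋃ b ∈ B, f b}

/-- Peleg lifting of a multirelation. -/
def pelegLift {Y Z : Type*} (S : Set (Y × Set Z)) : Set (Set Y × Set Z) :=
  {p | ∃ f : Y → Set Z, (∀ b ∈ p.1, (b, f b) ∈ S) ∧ p.2 = ⋃ b ∈ p.1, f b}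

/-- The singleton map 1_Y = {(y,{y})}. -/
def singletonMap (Y : Type*) : Set (Y × Set Y) := {p | p.2 = {p.1}}

/-- Converse of the membership relation: {(y,A) | y ∈ A}. -/
def memConv (Y : Type*) : Set (Y × Set Y) := {p | p.1 ∈ p.2}

/-- The inclusion relation Ξ on the powerset. -/
def inclRel (Z : Type*) : Set (Set Z × Set Z) := {p | p.1 ⊆ p.2}

/-- Up-closed multirelations. -/
def upClosed {X Y : Type*} (R : Set (X × Set Y)) : Prop :=
  ∀ a B C, (a, B) ∈ R → B ⊆ C → (a, C) ∈ R

/-- Univalent relations (partial functions). -/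
def isUnivalent {A B : Type*} (f : Set (A × B)) : Prop :=
  ∀ x y y', (x, y) ∈ f → (x, y') ∈ f → y = y'

/-- Domain of a relation. -/
def relDom {A B : Type*} (f : Set (A × B)) : Set A := {x | ∃ y, (x, y) ∈ f}

/-- Union-closed multirelations. -/
def unionClosed {Z W : Type*} (T : Set (Z × Set W)) : Prop :=
  ∀ z (𝔅 : Set (Set W)), 𝔅.Nonempty → (∀ B ∈ 𝔅, (z, B) ∈ T) → (z, ⋃₀ 𝔅) ∈ T

theorem kleisli_assoc {X Y Z W : Type*} (R : Set (X × Set Y)) (S : Set (Y × Set Z))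
    (T : Set (Z × Set W)) :
    kleisliComp (kleisliComp R S) T = kleisliComp R (kleisliComp S T) := by
  ext ⟨a, A⟩
  simp only [kleisliComp, Set.mem_setOf_eq]
  constructor
  · rintro ⟨B, ⟨B', hB', rfl⟩, rfl⟩
    refine ⟨B', hB', ?_⟩
    ext w
    simp only [Set.mem_sUnion, Set.mem_setOf_eq]
    constructor
    · rintro ⟨C, ⟨z, ⟨D, ⟨b, hb, hbD⟩, hzD⟩, hzC⟩, hwC⟩
      exact ⟨_, ⟨b, hb, D, hbD, rfl⟩, C, ⟨z, hzD, hzC⟩, hwC⟩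
    · rintro ⟨_, ⟨b, hb, D, hbD, rfl⟩, C, ⟨z, hzD, hzC⟩, hwC⟩
      exact ⟨C, ⟨z, ⟨D, ⟨b, hb, hbD⟩, hzD⟩, hzC⟩, hwC⟩
  · rintro ⟨B', hB', rfl⟩
    refine ⟨_, ⟨B', hB', rfl⟩, ?_⟩
    ext w
    simp only [Set.mem_sUnion, Set.mem_setOf_eq]
    constructor
    · rintro ⟨_, ⟨b, hb, D, hbD, rfl⟩, C, ⟨z, hzD, hzC⟩, hwC⟩
      exact ⟨C, ⟨z, ⟨D, ⟨b, hb, hbD⟩, hzD⟩, hzC⟩, hwC⟩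
    · rintro ⟨C, ⟨z, ⟨D, ⟨b, hb, hbD⟩, hzD⟩, hzC⟩, hwC⟩
      exact ⟨_, ⟨b, hb, D, hbD, rfl⟩, C, ⟨z, hzD, hzC⟩, hwC⟩
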